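/- Let R be a ring and M, N be R-modules. There is a bijection between the set of all R-submodules of M × N and the set of triples (A, B, f) where A is a submodule of M, B is a submodule of N, and f : B → M ⧸ A is an R-linear map; moreover the bijection can be chosen so that a submodule L of M × N corresponds to a triple whose first component is comap inl L and whose second component is map snd L. In particular, the map L ↦ (comap inl L, map snd L) from submodules of M × N to pairs of submodules of M and N is surjective. -/

import Mathlib

open Submodule LinearMap Function

section Aux
variable {R M N : Type*} [Ring R] [AddCommGroup M] [AddCommGroup N]
  [Module R M] [Module R N]

variable (L : Submodule R (M × N))

noncomputable def auxP : L →ₗ[R] (Submodule.map (LinearMap.snd R M N) L) :=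
  LinearMap.codRestrict _ ((LinearMap.snd R M N).comp L.subtype)
    (fun x => ⟨x.1, x.2, rfl⟩)

noncomputable def auxQ : L →ₗ[R] M ⧸ (Submodule.comap (LinearMap.inl R M N) L) :=
  (Submodule.mkQ _).comp ((LinearMap.fst R M N).comp L.subtype)

lemma auxP_surj : Surjective (auxP L) := by
  rintro ⟨b, x, hx, hxb⟩
  exact ⟨⟨x, hx⟩, Subtype.ext hxb⟩

lemma auxker : LinearMap.ker (auxP L) ≤ LinearMap.ker (auxQ L) := by
  rintro ⟨⟨m, n⟩, hmn⟩ h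
  have hn : n = 0 := congrArg Subtype.val (h : _)
  subst hn
  simpa [auxQ, Submodule.Quotient.mk_eq_zero] using hmn

noncomputable def auxF (L : Submodule R (M × N)) :
    Σ A : Submodule R M, Σ B : Submodule R N, (B →ₗ[R] M ⧸ A) :=
  ⟨Submodule.comap (LinearMap.inl R M N) L, Submodule.map (LinearMap.snd R M N) L,
    (Submodule.liftQ _ (auxQ L) (auxker L)).comp
      ((auxP L).quotKerEquivOfSurjective (auxP_surj L)).symm.toLinearMap⟩

lemma auxF_apply (x : L) : (auxF L).2.2 (auxP L x) = auxQ L x := by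
  have h : ((auxP L).quotKerEquivOfSurjective (auxP_surj L)).symm (auxP L x)
      = Submodule.Quotient.mk x := by
    rw [LinearEquiv.symm_apply_eq]
    simp [LinearMap.quotKerEquivOfSurjective]
  show Submodule.liftQ _ (auxQ L) (auxker L)
    (((auxP L).quotKerEquivOfSurjective (auxP_surj L)).symm (auxP L x)) = _
  rw [h]; rfl

end Aux

section Aux2
variable {R M N : Type*} [Ring R] [AddCommGroup M] [AddCommGroup N]
  [Module R M] [Module R N]

lemma auxF_mem_iff (L : Submodule R (M × N)) (m : M) (n : N) :
    (m, n) ∈ L ↔ ∃ h : n ∈ (auxF L).2.1,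
      (auxF L).2.2 ⟨n, h⟩ = Submodule.mkQ (auxF L).1 m := by
  constructor
  · intro hmn
    have h : n ∈ (auxF L).2.1 := ⟨(m, n), hmn, rfl⟩
    refine ⟨h, ?_⟩
    have : auxP L ⟨(m, n), hmn⟩ = ⟨n, h⟩ := rfl
    refine (auxF_apply L ⟨(m, n), hmn⟩).trans ?_
    rfl
  · rintro ⟨h, heq⟩
    obtain ⟨x, hx⟩ := auxP_surj L ⟨n, h⟩
    replace heq : auxQ L x = Submodule.mkQ (auxF L).1 m := by
      rw [← auxF_apply, hx]; exact heq
    have hxn : x.1.2 = n := congrArg Subtype.val hx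
    have hm : m - x.1.1 ∈ Submodule.comap (LinearMap.inl R M N) L := by
      rw [← Submodule.Quotient.eq]
      exact heq.symm
    have : (m - x.1.1, (0 : N)) + x.1 ∈ L := L.add_mem hm x.2
    have hx1 : (m - x.1.1, (0 : N)) + x.1 = (m, n) := by
      rw [Prod.ext_iff]
      constructor
      · simp
      · simp [hxn]
    rwa [hx1] at this

end Aux2

section Aux3
variable {R M N : Type*} [Ring R] [AddCommGroup M] [AddCommGroup N]
  [Module R M] [Module R N]

def auxG (A : Submodule R M) (B : Submodule R N) (f : B →ₗ[R] M ⧸ A) :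
    Submodule R (M × N) where
  carrier := {p | ∃ h : p.2 ∈ B, f ⟨p.2, h⟩ = Submodule.mkQ A p.1}
  zero_mem' := ⟨B.zero_mem, by simp [show (⟨0, B.zero_mem⟩ : B) = 0 from rfl]⟩
  add_mem' := by
    rintro ⟨a, b⟩ ⟨c, d⟩ ⟨hb, hfb⟩ ⟨hd, hfd⟩
    refine ⟨B.add_mem hb hd, ?_⟩
    show f ⟨b + d, B.add_mem hb hd⟩ = Submodule.mkQ A (a + c)
    have h1 : (⟨b + d, B.add_mem hb hd⟩ : B) = ⟨b, hb⟩ + ⟨d, hd⟩ := rfl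
    rw [h1, map_add, hfb, hfd, map_add]
  smul_mem' := by
    rintro r ⟨a, b⟩ ⟨hb, hfb⟩
    refine ⟨B.smul_mem r hb, ?_⟩
    show f ⟨r • b, B.smul_mem r hb⟩ = Submodule.mkQ A (r • a)
    have h1 : (⟨r • b, B.smul_mem r hb⟩ : B) = r • ⟨b, hb⟩ := rfl
    rw [h1, map_smul, hfb, map_smul]

lemma mem_auxG {A : Submodule R M} {B : Submodule R N} {f : B →ₗ[R] M ⧸ A}
    {m : M} {n : N} :
    (m, n) ∈ auxG A B f ↔ ∃ h : n ∈ B, f ⟨n, h⟩ = Submodule.mkQ A m := Iff.rfl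

lemma auxG_comap (A : Submodule R M) (B : Submodule R N) (f : B →ₗ[R] M ⧸ A) :
    Submodule.comap (LinearMap.inl R M N) (auxG A B f) = A := by
  ext m
  show (m, (0 : N)) ∈ auxG A B f ↔ m ∈ A
  rw [mem_auxG]
  constructor
  · rintro ⟨h, hf⟩
    have h1 : (⟨0, h⟩ : B) = 0 := rfl
    rw [h1, map_zero] at hf
    rw [← Submodule.Quotient.mk_eq_zero, ← Submodule.mkQ_apply, ← hf]
  · intro hm
    refine ⟨B.zero_mem, ?_⟩
    have h1 : (⟨0, B.zero_mem⟩ : B) = 0 := rfl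
    rw [h1, map_zero]
    symm
    rwa [Submodule.mkQ_apply, Submodule.Quotient.mk_eq_zero]

lemma auxG_map (A : Submodule R M) (B : Submodule R N) (f : B →ₗ[R] M ⧸ A) :
    Submodule.map (LinearMap.snd R M N) (auxG A B f) = B := by
  ext n
  constructor
  · rintro ⟨⟨m, n'⟩, ⟨h, _⟩, rfl⟩
    exact h
  · intro hn
    obtain ⟨m, hm⟩ := Submodule.mkQ_surjective A (f ⟨n, hn⟩)
    exact ⟨(m, n), ⟨hn, hm.symm⟩, rfl⟩

noncomputable def auxG' (t : Σ A : Submodule R M, Σ B : Submodule R N, (B →ₗ[R] M ⧸ A)) :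
    Submodule R (M × N) := auxG t.1 t.2.1 t.2.2

lemma auxGF (L : Submodule R (M × N)) : auxG' (auxF L) = L := by
  ext ⟨m, n⟩
  rw [auxG', mem_auxG, ← auxF_mem_iff]

lemma auxG'_inj : Injective (auxG' (R := R) (M := M) (N := N)) := by
  rintro ⟨A, B, f⟩ ⟨A', B', f'⟩ h
  have h0 : auxG A B f = auxG A' B' f' := h
  obtain rfl : A = A' := by
    rw [← auxG_comap A B f, ← auxG_comap A' B' f', h0]
  obtain rfl : B = B' := by
    rw [← auxG_map A B f, ← auxG_map A B' f', h0]
  suffices hf : f = f' by rw [hf]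
  ext ⟨n, hn⟩
  obtain ⟨m, hm⟩ := Submodule.mkQ_surjective A (f ⟨n, hn⟩)
  have h1 : (m, n) ∈ auxG A B f := ⟨hn, hm.symm⟩
  rw [show auxG A B f = auxG A B f' from h] at h1
  obtain ⟨h2, h3⟩ := h1
  rw [← hm]
  exact (h3.symm).symm ▸ rfl

lemma auxFG (t : Σ A : Submodule R M, Σ B : Submodule R N, (B →ₗ[R] M ⧸ A)) :
    auxF (auxG' t) = t :=
  auxG'_inj (auxGF (auxG' t))

end Aux3


/-- The set of `R`-submodules of `M × N` is in bijection with the set of triples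
`(A, B, f)` with `A ≤ M`, `B ≤ N` and `f : B →ₗ[R] M ⧸ A`, the bijection sending `L`
to a triple with first component `comap inl L` and second component `map snd L`.
In particular `L ↦ (comap inl L, map snd L)` is surjective. -/
theorem stmt2 (R M N : Type*) [Ring R] [AddCommGroup M] [AddCommGroup N]
    [Module R M] [Module R N] :
    (∃ e : Submodule R (M × N) ≃
        Σ A : Submodule R M, Σ B : Submodule R N, (B →ₗ[R] M ⧸ A),
      ∀ L : Submodule R (M × N),
        (e L).1 = Submodule.comap (LinearMap.inl R M N) L ∧
        (e L).2.1 = Submodule.map (LinearMap.snd R M N) L) ∧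
    Function.Surjective (fun L : Submodule R (M × N) =>
      (Submodule.comap (LinearMap.inl R M N) L,
       Submodule.map (LinearMap.snd R M N) L)) := by
  constructor
  · exact ⟨Equiv.mk auxF auxG' auxGF auxFG, fun L => ⟨rfl, rfl⟩⟩
  · rintro ⟨A, B⟩
    exact ⟨auxG A B 0, Prod.ext (auxG_comap A B 0) (auxG_map A B 0)⟩
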